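/- For any n-outcome POVM E = {E_i}, the relative entropy of POVM-based coherence satisfies 0 ≤ C_rel(ρ, E) ≤ log n for every density matrix ρ, and for pure states ρ = |ψ⟩⟨ψ| one has C_rel(|ψ⟩⟨ψ|, E) = H({p_i(|ψ⟩)}) where p_i = ⟨ψ|E_i|ψ⟩. -/

import Mathlib

open Matrix Kronecker Complex ComplexOrder

/-- Von Neumann entropy of a (Hermitian) matrix: S(ρ) = −Σ λ_i log λ_i over the
eigenvalues of ρ. -/
noncomputable def vN {ι : Type*} [Fintype ι] [DecidableEq ι]
    (ρ : Matrix ι ι ℂ) : ℝ :=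
  if h : ρ.IsHermitian then ∑ i, Real.negMulLog (h.eigenvalues i) else 0


/-- Jensen step: weighted sum with subprobability weights. -/
lemma aux_negMulLog_sum_ge {J : Type*} [Fintype J] (w x : J → ℝ)
    (hw : ∀ j, 0 ≤ w j) (hx : ∀ j, 0 ≤ x j) (hw1 : ∑ j, w j ≤ 1) :
    ∑ j, w j * Real.negMulLog (x j) ≤ Real.negMulLog (∑ j, w j * x j) := by
  have h := Real.concaveOn_negMulLog.le_map_sum (t := (Finset.univ : Finset (Option J)))
    (w := fun o => o.elim (1 - ∑ j, w j) w) (p := fun o => o.elim 0 x)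
    (by rintro (_|j) _
        · simpa using hw1
        · exact hw j)
    (by rw [Fintype.sum_option]; simp)
    (by rintro (_|j) _
        · exact le_refl (0:ℝ)
        · exact hx j)
  rw [Fintype.sum_option, Fintype.sum_option] at h
  simpa [Real.negMulLog_zero] using h

/-- Core majorization-style lemma. -/
lemma aux_sum_negMulLog_le {M J : Type*} [Fintype M] [Fintype J] (w : M → J → ℝ) (x : J → ℝ)
    (hw : ∀ m j, 0 ≤ w m j) (hx : ∀ j, 0 ≤ x j)
    (hrow : ∀ m, ∑ j, w m j ≤ 1) (hcol : ∀ j, x j ≠ 0 → ∑ m, w m j = 1) :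
    ∑ j, Real.negMulLog (x j) ≤ ∑ m, Real.negMulLog (∑ j, w m j * x j) := by
  calc ∑ j, Real.negMulLog (x j) = ∑ j, (∑ m, w m j) * Real.negMulLog (x j) := by
        refine Finset.sum_congr rfl fun j _ => ?_
        by_cases h : x j = 0
        · simp [h, Real.negMulLog_zero]
        · rw [hcol j h, one_mul]
    _ = ∑ m, ∑ j, w m j * Real.negMulLog (x j) := by
        rw [Finset.sum_comm]; simp [Finset.sum_mul]
    _ ≤ ∑ m, Real.negMulLog (∑ j, w m j * x j) :=
        Finset.sum_le_sum fun m _ => aux_negMulLog_sum_ge _ _ (hw m) hx (hrow m)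

/-- Shannon entropy bounded by log of alphabet size. -/
lemma aux_shannon_le {n : ℕ} (hn : 0 < n) (s : Fin n → ℝ)
    (h0 : ∀ i, 0 ≤ s i) (h1 : ∑ i, s i = 1) :
    ∑ i, Real.negMulLog (s i) ≤ Real.log n := by
  have h := Real.concaveOn_negMulLog.le_map_sum (t := (Finset.univ : Finset (Fin n)))
    (w := fun _ => (n : ℝ)⁻¹) (p := s)
    (fun i _ => by positivity)
    (by simp [Finset.card_univ]; field_simp)
    (fun i _ => h0 i)
  have hs : ∑ i, (n:ℝ)⁻¹ • s i = (n:ℝ)⁻¹ := by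
    rw [← Finset.smul_sum, h1, smul_eq_mul, mul_one]
  rw [hs] at h
  have hn' : (0:ℝ) < n := by exact_mod_cast hn
  have : Real.negMulLog ((n:ℝ)⁻¹) = (n:ℝ)⁻¹ * Real.log n := by
    unfold Real.negMulLog
    rw [Real.log_inv]; ring
  rw [this] at h
  have h2 : (n:ℝ)⁻¹ * ∑ i, Real.negMulLog (s i) ≤ (n:ℝ)⁻¹ * Real.log n := by
    calc (n:ℝ)⁻¹ * ∑ i, Real.negMulLog (s i) = ∑ i, (n:ℝ)⁻¹ • Real.negMulLog (s i) := by
          rw [Finset.mul_sum]; rfl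
      _ ≤ (n:ℝ)⁻¹ * Real.log n := h
  exact le_of_mul_le_mul_left h2 (by positivity) |>.trans_eq rfl


variable {d : ℕ}

lemma aux_conj (x y : Fin d → ℂ) : star (star x ⬝ᵥ y) = star y ⬝ᵥ x := by
  simp [dotProduct, Finset.sum_comm, mul_comm]

lemma aux_shift (Am : Matrix (Fin d) (Fin d) ℂ) (x y : Fin d → ℂ) :
    star (Amᴴ *ᵥ x) ⬝ᵥ y = star x ⬝ᵥ (Am *ᵥ y) := by
  rw [star_mulVec, conjTranspose_conjTranspose, ← dotProduct_mulVec]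

lemma aux_shift' (Am : Matrix (Fin d) (Fin d) ℂ) (x y : Fin d → ℂ) :
    star (Am *ᵥ x) ⬝ᵥ y = star x ⬝ᵥ (Amᴴ *ᵥ y) := by
  conv_lhs => rw [← conjTranspose_conjTranspose Am]
  rw [aux_shift]

lemma aux_pair (x y : Fin d → ℂ) :
    (star x ⬝ᵥ y) * (star y ⬝ᵥ x) = ((Complex.normSq (star y ⬝ᵥ x) : ℝ) : ℂ) := by
  rw [← aux_conj y x, Complex.star_def, mul_comm, Complex.mul_conj]

lemma aux_pair' (x y : Fin d → ℂ) :
    (star x ⬝ᵥ y) * (star y ⬝ᵥ x) = ((Complex.normSq (star x ⬝ᵥ y) : ℝ) : ℂ) := by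
  rw [mul_comm]; exact aux_pair y x

section eigen
variable {B : Matrix (Fin d) (Fin d) ℂ} (hB : B.IsHermitian)

/-- the j-th column of the eigenvector unitary -/
noncomputable def ecol (hB : B.IsHermitian) (j : Fin d) : Fin d → ℂ :=
  fun a => (hB.eigenvectorUnitary : Matrix (Fin d) (Fin d) ℂ) a j

lemma aux_orth (j j' : Fin d) :
    star (ecol hB j) ⬝ᵥ ecol hB j' = if j = j' then 1 else 0 := by
  have h : (star (hB.eigenvectorUnitary : Matrix (Fin d) (Fin d) ℂ)) *
      (hB.eigenvectorUnitary : Matrix (Fin d) (Fin d) ℂ) = 1 :=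
    Matrix.UnitaryGroup.star_mul_self hB.eigenvectorUnitary
  have h2 := congrFun (congrFun h j) j'
  simpa [Matrix.mul_apply, Matrix.one_apply, ecol, dotProduct, Matrix.star_apply] using h2

lemma aux_compl (a b : Fin d) :
    ∑ j, ecol hB j a * star (ecol hB j b) = if a = b then 1 else 0 := by
  have h : (hB.eigenvectorUnitary : Matrix (Fin d) (Fin d) ℂ) *
      (star (hB.eigenvectorUnitary : Matrix (Fin d) (Fin d) ℂ)) = 1 := by
    exact mem_unitaryGroup_iff.mp hB.eigenvectorUnitary.2
  have h2 := congrFun (congrFun h a) b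
  simpa [Matrix.mul_apply, Matrix.one_apply, ecol, dotProduct, Matrix.star_apply] using h2

lemma aux_entry (a b : Fin d) :
    B a b = ∑ j, (hB.eigenvalues j : ℂ) * (ecol hB j a * star (ecol hB j b)) := by
  conv_lhs => rw [hB.spectral_theorem, Unitary.conjStarAlgAut_apply]
  rw [Matrix.mul_apply]
  refine Finset.sum_congr rfl fun j _ => ?_
  rw [Matrix.mul_diagonal]
  simp only [ecol, Matrix.star_apply, Function.comp_apply]
  have hcast : (RCLike.ofReal (hB.eigenvalues j) : ℂ) = ((hB.eigenvalues j : ℝ) : ℂ) := rfl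
  rw [hcast]; ring

lemma aux_mulvec (j : Fin d) :
    B *ᵥ ecol hB j = fun a => (hB.eigenvalues j : ℂ) * ecol hB j a := by
  funext a
  simp only [mulVec, dotProduct]
  calc ∑ b, B a b * ecol hB j b
      = ∑ b, ∑ k, (hB.eigenvalues k : ℂ) * (ecol hB k a * star (ecol hB k b)) * ecol hB j b := by
        refine Finset.sum_congr rfl fun b _ => ?_
        rw [aux_entry hB a b, Finset.sum_mul]
    _ = ∑ k, (hB.eigenvalues k : ℂ) * ecol hB k a * (star (ecol hB k) ⬝ᵥ ecol hB j) := by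
        rw [Finset.sum_comm]
        refine Finset.sum_congr rfl fun k _ => ?_
        simp only [dotProduct, Finset.mul_sum, Pi.star_apply]
        exact Finset.sum_congr rfl fun b _ => by ring
    _ = (hB.eigenvalues j : ℂ) * ecol hB j a := by
        simp [aux_orth hB]

lemma aux_trace : B.trace = ((∑ j, hB.eigenvalues j : ℝ) : ℂ) := by
  unfold Matrix.trace
  calc ∑ a, B.diag a = ∑ a, ∑ j, (hB.eigenvalues j : ℂ) * (ecol hB j a * star (ecol hB j a)) := by
        exact Finset.sum_congr rfl fun a _ => aux_entry hB a a
    _ = ∑ j, (hB.eigenvalues j : ℂ) * (star (ecol hB j) ⬝ᵥ ecol hB j) := by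
        rw [Finset.sum_comm]
        refine Finset.sum_congr rfl fun j _ => ?_
        simp only [dotProduct, Finset.mul_sum, Pi.star_apply]
        exact Finset.sum_congr rfl fun a _ => by ring
    _ = ((∑ j, hB.eigenvalues j : ℝ) : ℂ) := by
        simp [aux_orth hB]

lemma aux_quad (x y : Fin d → ℂ) :
    star x ⬝ᵥ (B *ᵥ y) =
      ∑ j, (hB.eigenvalues j : ℂ) * ((star x ⬝ᵥ ecol hB j) * (star (ecol hB j) ⬝ᵥ y)) := by
  calc star x ⬝ᵥ (B *ᵥ y)
      = ∑ a, ∑ j, ∑ b, (hB.eigenvalues j : ℂ) *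
          ((star (x a) * ecol hB j a) * (star (ecol hB j b) * y b)) := by
        simp only [dotProduct, mulVec, Pi.star_apply]
        refine Finset.sum_congr rfl fun a _ => ?_
        rw [Finset.mul_sum]
        rw [Finset.sum_comm]
        refine Finset.sum_congr rfl fun b _ => ?_
        rw [aux_entry hB a b, Finset.sum_mul, Finset.mul_sum]
        exact Finset.sum_congr rfl fun j _ => by ring
    _ = ∑ j, ∑ a, ∑ b, (hB.eigenvalues j : ℂ) *
          ((star (x a) * ecol hB j a) * (star (ecol hB j b) * y b)) := by rw [Finset.sum_comm]
    _ = ∑ j, (hB.eigenvalues j : ℂ) * ((star x ⬝ᵥ ecol hB j) * (star (ecol hB j) ⬝ᵥ y)) := by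
        refine Finset.sum_congr rfl fun j _ => ?_
        simp only [dotProduct, Pi.star_apply, Finset.mul_sum, Finset.sum_mul]
        rw [Finset.sum_comm]
end eigen

/-- Parseval for a complete orthonormal family given by completeness relation. -/
lemma aux_parseval (z : Fin d → Fin d → ℂ)
    (hz : ∀ a b, ∑ j, z j a * star (z j b) = if a = b then 1 else 0) (g : Fin d → ℂ) :
    ((∑ j, Complex.normSq (star g ⬝ᵥ z j) : ℝ) : ℂ) = star g ⬝ᵥ g := by
  push_cast
  calc ∑ j, ((Complex.normSq (star g ⬝ᵥ z j) : ℝ) : ℂ)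
      = ∑ j, (star g ⬝ᵥ z j) * (star (z j) ⬝ᵥ g) := by
        exact Finset.sum_congr rfl fun j _ => (aux_pair' g (z j)).symm
    _ = ∑ j, ∑ a, ∑ b, star (g a) * g b * (z j a * star (z j b)) := by
        refine Finset.sum_congr rfl fun j _ => ?_
        simp only [dotProduct, Pi.star_apply, Finset.mul_sum, Finset.sum_mul]
        rw [Finset.sum_comm]
        refine Finset.sum_congr rfl fun a _ => Finset.sum_congr rfl fun b _ => by ring
    _ = ∑ a, ∑ b, star (g a) * g b * ∑ j, (z j a * star (z j b)) := by
        rw [Finset.sum_comm]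
        refine Finset.sum_congr rfl fun a _ => ?_
        rw [Finset.sum_comm]
        refine Finset.sum_congr rfl fun b _ => ?_
        rw [Finset.mul_sum]
    _ = star g ⬝ᵥ g := by
        simp only [hz]
        simp [dotProduct, Finset.sum_ite_eq, mul_comm]


lemma aux_nrm (x : Fin d → ℂ) :
    star x ⬝ᵥ x = ((∑ a, Complex.normSq (x a) : ℝ) : ℂ) := by
  push_cast
  simp only [dotProduct, Pi.star_apply]
  exact Finset.sum_congr rfl fun a _ => by
    rw [Complex.star_def, mul_comm, Complex.mul_conj]

lemma aux_psd_smul (r : ℝ) (hr : 0 ≤ r) {B : Matrix (Fin d) (Fin d) ℂ} (hB : B.PosSemidef) :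
    ((r : ℂ) • B).PosSemidef := by
  rw [Matrix.posSemidef_iff_dotProduct_mulVec]
  constructor
  · unfold Matrix.IsHermitian
    rw [conjTranspose_smul, hB.1.eq]
    congr 1
    simp
  · intro x
    have h := hB.dotProduct_mulVec_nonneg x
    rw [smul_mulVec, dotProduct_smul]
    have hre := (Complex.eq_re_of_ofReal_le h).symm
    have hre0 : 0 ≤ (star x ⬝ᵥ B *ᵥ x).re := by
      rw [Complex.le_def] at h; exact h.1
    rw [← hre, smul_eq_mul, ← Complex.ofReal_mul]
    rw [Complex.le_def]
    constructor
    · simpa using mul_nonneg hr hre0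
    · simp

lemma aux_psd_re_nonneg {B : Matrix (Fin d) (Fin d) ℂ} (hB : B.PosSemidef) (x : Fin d → ℂ) :
    0 ≤ (star x ⬝ᵥ B *ᵥ x).re := by
  have h := hB.dotProduct_mulVec_nonneg x
  rw [Complex.le_def] at h; exact h.1

lemma aux_psd_trace_zero {B : Matrix (Fin d) (Fin d) ℂ} (hB : B.PosSemidef)
    (htr : B.trace = 0) : B = 0 := by
  have hev : ∀ j, hB.1.eigenvalues j = 0 := by
    have h1 := aux_trace hB.1
    rw [htr] at h1
    have h2 : (∑ j, hB.1.eigenvalues j : ℝ) = 0 := by exact_mod_cast h1.symm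
    intro j
    exact (Finset.sum_eq_zero_iff_of_nonneg (fun i _ => hB.eigenvalues_nonneg i)).mp h2 j (Finset.mem_univ j)
  ext a b
  rw [aux_entry hB.1 a b]
  simp [hev]

lemma aux_cs (x y : Fin d → ℂ) :
    Complex.normSq (star x ⬝ᵥ y) ≤ (star x ⬝ᵥ x).re * (star y ⬝ᵥ y).re := by
  set X : EuclideanSpace ℂ (Fin d) := (WithLp.equiv 2 (Fin d → ℂ)).symm x with hX
  set Y : EuclideanSpace ℂ (Fin d) := (WithLp.equiv 2 (Fin d → ℂ)).symm y with hY
  have hxy : (inner ℂ X Y : ℂ) = star x ⬝ᵥ y := by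
    rw [EuclideanSpace.inner_eq_star_dotProduct, dotProduct_comm]; rfl
  have hxx : (inner ℂ X X : ℂ) = star x ⬝ᵥ x := by
    rw [EuclideanSpace.inner_eq_star_dotProduct, dotProduct_comm]; rfl
  have hyy : (inner ℂ Y Y : ℂ) = star y ⬝ᵥ y := by
    rw [EuclideanSpace.inner_eq_star_dotProduct, dotProduct_comm]; rfl
  have h := norm_inner_le_norm (𝕜 := ℂ) X Y
  have h2 : ‖(inner ℂ X Y : ℂ)‖^2 ≤ (‖X‖*‖Y‖)^2 := by
    apply pow_le_pow_left₀ (norm_nonneg _) h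
  calc Complex.normSq (star x ⬝ᵥ y) = ‖(inner ℂ X Y : ℂ)‖^2 := by
        rw [hxy, Complex.sq_norm]
    _ ≤ (‖X‖*‖Y‖)^2 := h2
    _ = (star x ⬝ᵥ x).re * (star y ⬝ᵥ y).re := by
        rw [mul_pow, ← hxx, ← hyy]
        rw [← inner_self_eq_norm_sq (𝕜 := ℂ) X, ← inner_self_eq_norm_sq (𝕜 := ℂ) Y]
        rfl

lemma aux_bessel (s : Finset (Fin d)) (y : Fin d → Fin d → ℂ)
    (hy : ∀ j ∈ s, ∀ j' ∈ s, star (y j) ⬝ᵥ y j' = if j = j' then 1 else 0) (m : Fin d) :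
    ∑ j ∈ s, Complex.normSq (y j m) ≤ 1 := by
  set v : {j // j ∈ s} → EuclideanSpace ℂ (Fin d) :=
    fun j => (WithLp.equiv 2 (Fin d → ℂ)).symm (y j) with hv
  have hON : Orthonormal ℂ v := by
    rw [orthonormal_iff_ite]
    intro i j
    have : (inner ℂ (v i) (v j) : ℂ) = star (y i) ⬝ᵥ y j := by
      rw [EuclideanSpace.inner_eq_star_dotProduct, dotProduct_comm]; simp [hv]
    rw [this, hy i i.2 j j.2]
    by_cases h : (i : Fin d) = j
    · simp [h, Subtype.ext h]
    · rw [if_neg h, if_neg (fun hc => h (congrArg Subtype.val hc))]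
  have hb := Orthonormal.sum_inner_products_le (s := (Finset.univ : Finset {j // j ∈ s}))
    (EuclideanSpace.single m (1:ℂ)) hON
  have hsingle : ∀ j : {j // j ∈ s},
      (inner ℂ (v j) (EuclideanSpace.single m (1:ℂ)) : ℂ) = star (y j m) := by
    intro j
    rw [EuclideanSpace.inner_eq_star_dotProduct]
    simp [hv, dotProduct, Pi.single_apply]
  rw [EuclideanSpace.norm_single] at hb
  simp only [hsingle] at hb
  calc ∑ j ∈ s, Complex.normSq (y j m)
      = ∑ j : {j // j ∈ s}, Complex.normSq (y j m) := (Finset.sum_coe_sort s _).symm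
    _ ≤ 1 := by
        refine le_trans (le_of_eq ?_) (by simpa using hb)
        refine Finset.sum_congr rfl fun j _ => ?_
        simp [norm_star, Complex.sq_norm]

lemma aux_star_mul_self (c : ℂ) : star c * c = ((Complex.normSq c : ℝ) : ℂ) := by
  rw [Complex.star_def, mul_comm, Complex.mul_conj]

lemma aux_dot_sum {d n : ℕ} (F : Fin n → Matrix (Fin d) (Fin d) ℂ) (x y : Fin d → ℂ) :
    ∑ i, star x ⬝ᵥ (F i *ᵥ y) = star x ⬝ᵥ ((∑ i, F i) *ᵥ y) := by
  simp only [dotProduct, mulVec, Matrix.sum_apply, Finset.sum_mul, Finset.mul_sum,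
    Pi.star_apply]
  rw [Finset.sum_comm]
  refine Finset.sum_congr rfl fun a _ => ?_
  rw [Finset.sum_comm]

/-- The core scalar inequality: double majorization through the overlap coefficients. -/
lemma core {d n : ℕ} (hn : 0 < n) (lam : Fin d → ℝ) (p : Fin n → ℝ) (γ : Fin n → Fin d → ℝ)
    (G : Fin n → Fin d → Fin d → ℂ)
    (hlam0 : ∀ ℓ, 0 ≤ lam ℓ) (hlam1 : ∑ ℓ, lam ℓ = 1)
    (hp0 : ∀ i, 0 ≤ p i) (hγ0 : ∀ i j, 0 ≤ γ i j)
    (H1 : ∀ i j j', ∑ ℓ, (lam ℓ : ℂ) * (star (G i ℓ j) * G i ℓ j') =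
      if j = j' then ((p i * γ i j : ℝ) : ℂ) else 0)
    (H2 : ∀ ℓ, ∑ i, ∑ j, Complex.normSq (G i ℓ j) = 1)
    (H3 : ∀ i j, ∑ ℓ, Complex.normSq (G i ℓ j) ≤ 1) :
    (∑ ℓ, Real.negMulLog (lam ℓ) ≤ ∑ i, ∑ j, Real.negMulLog (p i * γ i j)) ∧
    (∑ i, ∑ j, Real.negMulLog (p i * γ i j) ≤ ∑ ℓ, Real.negMulLog (lam ℓ) + Real.log n) := by
  have hβ0 : ∀ i j, 0 ≤ p i * γ i j := fun i j => mul_nonneg (hp0 i) (hγ0 i j)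
  have hβre : ∀ i j, ∑ ℓ, Complex.normSq (G i ℓ j) * lam ℓ = p i * γ i j := by
    intro i j
    have h := H1 i j j
    rw [if_pos rfl] at h
    have h2 : ∑ ℓ, (lam ℓ : ℂ) * (star (G i ℓ j) * G i ℓ j)
        = ((∑ ℓ, Complex.normSq (G i ℓ j) * lam ℓ : ℝ) : ℂ) := by
      push_cast
      refine Finset.sum_congr rfl fun ℓ _ => ?_
      rw [aux_star_mul_self]
      push_cast
      ring
    rw [h2] at h
    exact_mod_cast h
  constructor
  · -- lower bound
    have lower := aux_sum_negMulLog_le (M := Fin n × Fin d) (J := Fin d)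
      (fun m ℓ => Complex.normSq (G m.1 ℓ m.2)) lam
      (fun m ℓ => Complex.normSq_nonneg _) hlam0
      (fun m => H3 m.1 m.2)
      (fun ℓ _ => by rw [Fintype.sum_prod_type]; exact H2 ℓ)
    refine lower.trans (le_of_eq ?_)
    rw [Fintype.sum_prod_type]
    exact Finset.sum_congr rfl fun i _ => Finset.sum_congr rfl fun j _ => by rw [hβre i j]
  · -- upper bound
    have upper_i : ∀ i, ∑ j, Real.negMulLog (p i * γ i j)
        ≤ ∑ ℓ, Real.negMulLog (lam ℓ * ∑ j, Complex.normSq (G i ℓ j)) := by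
      intro i
      set c : Fin d → Fin d → ℂ := fun ℓ j => ((Real.sqrt (lam ℓ) : ℝ) : ℂ) * G i ℓ j with hcdef
      have hF1 : ∀ j j', ∑ ℓ, star (c ℓ j) * c ℓ j' =
          if j = j' then ((p i * γ i j : ℝ) : ℂ) else 0 := by
        intro j j'
        rw [← H1 i j j']
        refine Finset.sum_congr rfl fun ℓ _ => ?_
        calc star (c ℓ j) * c ℓ j'
            = ((Real.sqrt (lam ℓ) * Real.sqrt (lam ℓ) : ℝ) : ℂ) * (star (G i ℓ j) * G i ℓ j') := by
              rw [hcdef]; dsimp only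
              rw [star_mul', Complex.star_def, Complex.conj_ofReal]
              push_cast
              ring
          _ = (lam ℓ : ℂ) * (star (G i ℓ j) * G i ℓ j') := by
              rw [Real.mul_self_sqrt (hlam0 ℓ)]
      have hdiag : ∀ j, ∑ ℓ, Complex.normSq (c ℓ j) = p i * γ i j := by
        intro j
        have h := hF1 j j
        rw [if_pos rfl] at h
        have h2 : ∑ ℓ, star (c ℓ j) * c ℓ j = ((∑ ℓ, Complex.normSq (c ℓ j) : ℝ) : ℂ) := by
          push_cast
          exact Finset.sum_congr rfl fun ℓ _ => aux_star_mul_self _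
        rw [h2] at h
        exact_mod_cast h
      have hc0 : ∀ j, p i * γ i j = 0 → ∀ ℓ, c ℓ j = 0 := by
        intro j hj ℓ
        have h := hdiag j
        rw [hj] at h
        have h2 := (Finset.sum_eq_zero_iff_of_nonneg
          (fun ℓ _ => Complex.normSq_nonneg _)).mp h ℓ (Finset.mem_univ ℓ)
        exact Complex.normSq_eq_zero.mp h2
      set W : Fin d → Fin d → ℝ := fun ℓ j =>
        if p i * γ i j = 0 then 0 else Complex.normSq (c ℓ j) / (p i * γ i j) with hWdef
      have hW0 : ∀ ℓ j, 0 ≤ W ℓ j := by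
        intro ℓ j
        rw [hWdef]; dsimp only
        split
        · exact le_refl 0
        · exact div_nonneg (Complex.normSq_nonneg _) (hβ0 i j)
      have hWrow : ∀ ℓ, ∑ j, W ℓ j ≤ 1 := by
        intro ℓ
        have hb := aux_bessel (Finset.univ.filter (fun j => ¬ (p i * γ i j = 0)))
          (fun j => fun ℓ' => c ℓ' j / ((Real.sqrt (p i * γ i j) : ℝ) : ℂ))
          (by
            intro j hj j' hj'
            rw [Finset.mem_filter] at hj hj'
            simp only [dotProduct, Pi.star_apply]
            have hstep : ∀ ℓ', star (c ℓ' j / ((Real.sqrt (p i * γ i j) : ℝ) : ℂ)) *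
                (c ℓ' j' / ((Real.sqrt (p i * γ i j') : ℝ) : ℂ))
                = (star (c ℓ' j) * c ℓ' j') /
                  (((Real.sqrt (p i * γ i j) : ℝ) : ℂ) * ((Real.sqrt (p i * γ i j') : ℝ) : ℂ)) := by
              intro ℓ'
              rw [star_div₀, Complex.star_def, Complex.conj_ofReal, ← Complex.star_def,
                div_mul_div_comm]
            simp only [hstep]
            rw [← Finset.sum_div, hF1 j j']
            by_cases h : j = j'
            · subst h
              rw [if_pos rfl, if_pos rfl, ← Complex.ofReal_mul,
                Real.mul_self_sqrt (hβ0 i j), div_self]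
              exact_mod_cast hj.2
            · rw [if_neg h, if_neg h, zero_div])
          ℓ
        calc ∑ j, W ℓ j
            = ∑ j ∈ Finset.univ.filter (fun j => ¬ (p i * γ i j = 0)), W ℓ j := by
              rw [Finset.sum_filter]
              refine Finset.sum_congr rfl fun j _ => ?_
              by_cases h : p i * γ i j = 0
              · simp [hWdef, h]
              · simp [hWdef, h]
          _ ≤ 1 := by
              refine le_trans (le_of_eq (Finset.sum_congr rfl fun j hj => ?_)) hb
              rw [Finset.mem_filter] at hj
              rw [hWdef]; dsimp only
              rw [if_neg hj.2, Complex.normSq_div, Complex.normSq_ofReal,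
                Real.mul_self_sqrt (hβ0 i j)]
      have hWcol : ∀ j, p i * γ i j ≠ 0 → ∑ ℓ, W ℓ j = 1 := by
        intro j h
        simp only [hWdef, if_neg h]
        rw [← Finset.sum_div, hdiag j, div_self h]
      have hWx : ∀ ℓ, ∑ j, W ℓ j * (p i * γ i j) = lam ℓ * ∑ j, Complex.normSq (G i ℓ j) := by
        intro ℓ
        calc ∑ j, W ℓ j * (p i * γ i j) = ∑ j, Complex.normSq (c ℓ j) := by
              refine Finset.sum_congr rfl fun j _ => ?_
              by_cases h : p i * γ i j = 0
              · rw [hWdef]; dsimp only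
                rw [if_pos h, zero_mul, hc0 j h ℓ]
                simp
              · rw [hWdef]; dsimp only
                rw [if_neg h, div_mul_cancel₀ _ h]
          _ = lam ℓ * ∑ j, Complex.normSq (G i ℓ j) := by
              rw [Finset.mul_sum]
              refine Finset.sum_congr rfl fun j _ => ?_
              rw [hcdef]; dsimp only
              rw [Complex.normSq_mul, Complex.normSq_ofReal, Real.mul_self_sqrt (hlam0 ℓ)]
      have hmain := aux_sum_negMulLog_le (M := Fin d) (J := Fin d) W (fun j => p i * γ i j)
        hW0 (hβ0 i) hWrow (fun j h => hWcol j h)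
      refine hmain.trans (le_of_eq (Finset.sum_congr rfl fun ℓ _ => ?_))
      rw [hWx ℓ]
    have h1 : ∑ i, ∑ j, Real.negMulLog (p i * γ i j)
        ≤ ∑ i, ∑ ℓ, Real.negMulLog (lam ℓ * ∑ j, Complex.normSq (G i ℓ j)) :=
      Finset.sum_le_sum fun i _ => upper_i i
    refine h1.trans ?_
    have hs0 : ∀ i ℓ, 0 ≤ ∑ j, Complex.normSq (G i ℓ j) :=
      fun i ℓ => Finset.sum_nonneg fun j _ => Complex.normSq_nonneg _
    have h2 : ∑ i, ∑ ℓ, Real.negMulLog (lam ℓ * ∑ j, Complex.normSq (G i ℓ j))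
        = ∑ ℓ, (Real.negMulLog (lam ℓ) * (∑ i, ∑ j, Complex.normSq (G i ℓ j))
            + lam ℓ * ∑ i, Real.negMulLog (∑ j, Complex.normSq (G i ℓ j))) := by
      rw [Finset.sum_comm]
      refine Finset.sum_congr rfl fun ℓ _ => ?_
      rw [Finset.mul_sum, Finset.mul_sum, ← Finset.sum_add_distrib]
      refine Finset.sum_congr rfl fun i _ => ?_
      rw [Real.negMulLog_mul]
      ring
    rw [h2]
    have h3 : ∀ ℓ, Real.negMulLog (lam ℓ) * (∑ i, ∑ j, Complex.normSq (G i ℓ j))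
        + lam ℓ * ∑ i, Real.negMulLog (∑ j, Complex.normSq (G i ℓ j))
        ≤ Real.negMulLog (lam ℓ) + lam ℓ * Real.log n := by
      intro ℓ
      rw [H2 ℓ, mul_one]
      refine add_le_add_right ?_ _
      refine mul_le_mul_of_nonneg_left ?_ (hlam0 ℓ)
      exact aux_shannon_le hn (fun i => ∑ j, Complex.normSq (G i ℓ j))
        (fun i => hs0 i ℓ) (H2 ℓ)
    refine (Finset.sum_le_sum fun ℓ _ => h3 ℓ).trans (le_of_eq ?_)
    rw [Finset.sum_add_distrib, ← Finset.sum_mul, hlam1, one_mul]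

lemma key {d n : ℕ} (E A : Fin n → Matrix (Fin d) (Fin d) ℂ)
    (hE : ∀ i, E i = (A i)ᴴ * A i) (hsum : ∑ i, E i = 1)
    (ρ : Matrix (Fin d) (Fin d) ℂ) (hρ : ρ.PosSemidef) (htr : ρ.trace = 1) (hn : 0 < n) :
    vN ρ ≤ (∑ i, Real.negMulLog ((Matrix.trace (E i * ρ)).re))
        + (∑ i, ((Matrix.trace (E i * ρ)).re) *
            vN ((((Matrix.trace (E i * ρ)).re : ℂ))⁻¹ • (A i * ρ * (A i)ᴴ)))
    ∧ (∑ i, Real.negMulLog ((Matrix.trace (E i * ρ)).re))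
        + (∑ i, ((Matrix.trace (E i * ρ)).re) *
            vN ((((Matrix.trace (E i * ρ)).re : ℂ))⁻¹ • (A i * ρ * (A i)ᴴ)))
      ≤ vN ρ + Real.log n := by
  classical
  -- probabilities and post-measurement matrices
  have hBpsd : ∀ i, (A i * ρ * (A i)ᴴ).PosSemidef := fun i => hρ.mul_mul_conjTranspose_same (A i)
  have htrB : ∀ i, Matrix.trace (E i * ρ) = (A i * ρ * (A i)ᴴ).trace := by
    intro i
    rw [hE i, mul_assoc, Matrix.trace_mul_comm]
  set p : Fin n → ℝ := fun i => (Matrix.trace (E i * ρ)).re with hpdef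
  have hpsum_ev : ∀ i, p i = ∑ j, (hBpsd i).1.eigenvalues j := by
    intro i
    have h1 := aux_trace (hBpsd i).1
    show (Matrix.trace (E i * ρ)).re = _
    rw [htrB i, h1, Complex.ofReal_re]
  have hp0 : ∀ i, 0 ≤ p i := fun i => by
    rw [hpsum_ev i]
    exact Finset.sum_nonneg fun j _ => (hBpsd i).eigenvalues_nonneg j
  have hpc : ∀ i, ((p i : ℝ) : ℂ) = (A i * ρ * (A i)ᴴ).trace := by
    intro i
    rw [hpsum_ev i, aux_trace (hBpsd i).1]
  have hB0 : ∀ i, p i = 0 → A i * ρ * (A i)ᴴ = 0 := by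
    intro i h
    exact aux_psd_trace_zero (hBpsd i) (by rw [← hpc i, h, Complex.ofReal_zero])
  set Mm : Fin n → Matrix (Fin d) (Fin d) ℂ :=
    fun i => ((p i : ℂ))⁻¹ • (A i * ρ * (A i)ᴴ) with hMdef
  have hBM : ∀ i, A i * ρ * (A i)ᴴ = (p i : ℂ) • Mm i := by
    intro i
    by_cases h : p i = 0
    · have hM0 : Mm i = 0 := by
        rw [hMdef]
        dsimp only
        rw [hB0 i h, smul_zero]
      rw [hB0 i h, hM0, smul_zero]
    · show _ = (p i : ℂ) • (((p i : ℂ))⁻¹ • _)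
      rw [smul_smul, mul_inv_cancel₀ (by exact_mod_cast h), one_smul]
  have hMpsd : ∀ i, (Mm i).PosSemidef := by
    intro i
    have h : ((p i : ℂ))⁻¹ = (((p i)⁻¹ : ℝ) : ℂ) := by push_cast; rfl
    show ((((p i : ℝ)) : ℂ)⁻¹ • (A i * ρ * (A i)ᴴ)).PosSemidef
    rw [h]
    exact aux_psd_smul _ (inv_nonneg.mpr (hp0 i)) (hBpsd i)
  -- eigen data
  set γ : Fin n → Fin d → ℝ := fun i j => (hMpsd i).1.eigenvalues j with hγdef
  set z : Fin n → Fin d → Fin d → ℂ := fun i j => ecol (hMpsd i).1 j with hzdef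
  set lam : Fin d → ℝ := fun ℓ => hρ.1.eigenvalues ℓ with hlamdef
  set wv : Fin d → Fin d → ℂ := fun ℓ => ecol hρ.1 ℓ with hwdef
  set g : Fin n → Fin d → Fin d → ℂ := fun i ℓ => A i *ᵥ wv ℓ with hgdef
  set G : Fin n → Fin d → Fin d → ℂ := fun i ℓ j => star (g i ℓ) ⬝ᵥ z i j with hGdef
  have hγ0 : ∀ i j, 0 ≤ γ i j := fun i j => (hMpsd i).eigenvalues_nonneg j
  have hlam0 : ∀ ℓ, 0 ≤ lam ℓ := fun ℓ => hρ.eigenvalues_nonneg ℓ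
  have hlam1 : ∑ ℓ, lam ℓ = 1 := by
    have h1 := aux_trace hρ.1
    rw [htr] at h1
    exact_mod_cast h1.symm
  have hγsum : ∀ i, p i ≠ 0 → ∑ j, γ i j = 1 := by
    intro i h
    have h1 := aux_trace (hMpsd i).1
    have h2 : (Mm i).trace = 1 := by
      show (((p i : ℝ) : ℂ)⁻¹ • (A i * ρ * (A i)ᴴ)).trace = 1
      rw [Matrix.trace_smul, ← hpc i, smul_eq_mul, inv_mul_cancel₀ (by exact_mod_cast h)]
    rw [h2] at h1
    exact_mod_cast h1.symm
  have hvNρ : vN ρ = ∑ ℓ, Real.negMulLog (lam ℓ) := by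
    unfold vN
    rw [dif_pos hρ.1]
  have hvNM : ∀ i, vN (Mm i) = ∑ j, Real.negMulLog (γ i j) := by
    intro i
    unfold vN
    rw [dif_pos (hMpsd i).1]
  -- eigenvector identities
  have hMz : ∀ i j, Mm i *ᵥ z i j = fun a => (γ i j : ℂ) * z i j a :=
    fun i j => aux_mulvec (hMpsd i).1 j
  have hBz : ∀ i j, (A i * ρ * (A i)ᴴ) *ᵥ z i j = fun a => ((p i * γ i j : ℝ) : ℂ) * z i j a := by
    intro i j
    rw [hBM i, smul_mulVec, hMz i j]
    funext a
    simp only [Pi.smul_apply, smul_eq_mul]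
    push_cast
    ring
  have horthz : ∀ i j j', star (z i j) ⬝ᵥ z i j' = if j = j' then 1 else 0 :=
    fun i => aux_orth (hMpsd i).1
  have horthw : ∀ ℓ ℓ', star (wv ℓ) ⬝ᵥ wv ℓ' = if ℓ = ℓ' then 1 else 0 := aux_orth hρ.1
  have hβdot : ∀ i j j', star (z i j) ⬝ᵥ ((A i * ρ * (A i)ᴴ) *ᵥ z i j') =
      if j = j' then ((p i * γ i j : ℝ) : ℂ) else 0 := by
    intro i j j'
    rw [hBz i j']
    calc star (z i j) ⬝ᵥ (fun a => ((p i * γ i j' : ℝ) : ℂ) * z i j' a)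
        = ((p i * γ i j' : ℝ) : ℂ) * (star (z i j) ⬝ᵥ z i j') := by
          simp only [dotProduct, Pi.star_apply, Finset.mul_sum]
          exact Finset.sum_congr rfl fun a _ => by ring
      _ = if j = j' then ((p i * γ i j : ℝ) : ℂ) else 0 := by
          rw [horthz i j j']
          by_cases h : j = j'
          · subst h; simp
          · simp [h]
  have hBform : ∀ i j j', star (z i j) ⬝ᵥ ((A i * ρ * (A i)ᴴ) *ᵥ z i j') =
      ∑ ℓ, (lam ℓ : ℂ) * ((star (z i j) ⬝ᵥ g i ℓ) * (star (g i ℓ) ⬝ᵥ z i j')) := by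
    intro i j j'
    have h1 : (A i * ρ * (A i)ᴴ) *ᵥ z i j' = A i *ᵥ (ρ *ᵥ ((A i)ᴴ *ᵥ z i j')) := by
      rw [Matrix.mulVec_mulVec, Matrix.mulVec_mulVec]
    rw [h1, ← aux_shift (A i), aux_quad hρ.1]
    refine Finset.sum_congr rfl fun ℓ _ => ?_
    congr 1
    congr 1
    · exact aux_shift (A i) (z i j) (ecol hρ.1 ℓ)
    · exact (aux_shift' (A i) (wv ℓ) (z i j')).symm
  -- H1
  have H1 : ∀ i j j', ∑ ℓ, (lam ℓ : ℂ) * (star (G i ℓ j) * G i ℓ j') =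
      if j = j' then ((p i * γ i j : ℝ) : ℂ) else 0 := by
    intro i j j'
    rw [← hβdot i j j', hBform i j j']
    refine Finset.sum_congr rfl fun ℓ _ => ?_
    congr 1
    congr 1
    show star (star (g i ℓ) ⬝ᵥ z i j) = star (z i j) ⬝ᵥ g i ℓ
    exact aux_conj (g i ℓ) (z i j)
  -- H2
  have hcomplz : ∀ i a b, ∑ j, z i j a * star (z i j b) = if a = b then 1 else 0 :=
    fun i => aux_compl (hMpsd i).1
  have hginner : ∀ i ℓ, ((∑ j, Complex.normSq (G i ℓ j) : ℝ) : ℂ) = star (g i ℓ) ⬝ᵥ g i ℓ := by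
    intro i ℓ
    exact aux_parseval (z i) (hcomplz i) (g i ℓ)
  have H2 : ∀ ℓ, ∑ i, ∑ j, Complex.normSq (G i ℓ j) = 1 := by
    intro ℓ
    have hc : ((∑ i, ∑ j, Complex.normSq (G i ℓ j) : ℝ) : ℂ) = 1 := by
      push_cast
      calc ∑ i, ∑ j, ((Complex.normSq (G i ℓ j) : ℝ) : ℂ)
          = ∑ i, star (g i ℓ) ⬝ᵥ g i ℓ := by
            refine Finset.sum_congr rfl fun i _ => ?_
            rw [← hginner i ℓ]
            push_cast
            rfl
        _ = ∑ i, star (wv ℓ) ⬝ᵥ (E i *ᵥ wv ℓ) := by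
            refine Finset.sum_congr rfl fun i _ => ?_
            show star (A i *ᵥ wv ℓ) ⬝ᵥ (A i *ᵥ wv ℓ) = _
            rw [aux_shift' (A i), Matrix.mulVec_mulVec, ← hE i]
        _ = star (wv ℓ) ⬝ᵥ ((∑ i, E i) *ᵥ wv ℓ) := aux_dot_sum E (wv ℓ) (wv ℓ)
        _ = 1 := by
            rw [hsum, Matrix.one_mulVec, horthw ℓ ℓ, if_pos rfl]
    exact_mod_cast hc
  -- H3
  have H3 : ∀ i j, ∑ ℓ, Complex.normSq (G i ℓ j) ≤ 1 := by
    intro i j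
    set uu : Fin d → ℂ := (A i)ᴴ *ᵥ z i j with huu
    have hGu : ∀ ℓ, Complex.normSq (G i ℓ j) = Complex.normSq (star uu ⬝ᵥ wv ℓ) := by
      intro ℓ
      have h1 : G i ℓ j = star (wv ℓ) ⬝ᵥ uu := by
        show star (A i *ᵥ wv ℓ) ⬝ᵥ z i j = _
        rw [aux_shift' (A i)]
      rw [h1, ← aux_conj (wv ℓ) uu]
      exact (Complex.normSq_conj _).symm
    have hcomplw : ∀ a b, ∑ ℓ, wv ℓ a * star (wv ℓ b) = if a = b then 1 else 0 :=
      aux_compl hρ.1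
    have hpars : ((∑ ℓ, Complex.normSq (star uu ⬝ᵥ wv ℓ) : ℝ) : ℂ) = star uu ⬝ᵥ uu :=
      aux_parseval wv hcomplw uu
    set t : ℝ := ∑ a, Complex.normSq (uu a) with htdef
    have ht : star uu ⬝ᵥ uu = ((t : ℝ) : ℂ) := aux_nrm uu
    have ht0 : 0 ≤ t := Finset.sum_nonneg fun a _ => Complex.normSq_nonneg _
    have hsumval : ∑ ℓ, Complex.normSq (G i ℓ j) = t := by
      have := hpars
      rw [ht] at this
      have h2 : (∑ ℓ, Complex.normSq (star uu ⬝ᵥ wv ℓ) : ℝ) = t := by exact_mod_cast this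
      rw [← h2]
      exact Finset.sum_congr rfl fun ℓ _ => hGu ℓ
    rw [hsumval]
    -- now show t ≤ 1 via Cauchy-Schwarz and E i ≤ 1
    have hE1 : (1 - E i).PosSemidef := by
      have hall : ∀ s : Finset (Fin n), (∑ k ∈ s, E k).PosSemidef := by
        intro s
        refine Finset.sum_induction _ _ (fun a b ha hb => ha.add hb) ?_ ?_
        · exact Matrix.PosSemidef.zero
        · intro k _
          rw [hE k]
          exact Matrix.posSemidef_conjTranspose_mul_self (A k)
      have h1 : (1 : Matrix (Fin d) (Fin d) ℂ) - E i = ∑ k ∈ Finset.univ.erase i, E k := by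
        rw [← hsum, ← Finset.add_sum_erase _ E (Finset.mem_univ i), add_sub_cancel_left]
      rw [h1]
      exact hall _
    have hz1 : (star (z i j) ⬝ᵥ z i j).re = 1 := by
      rw [horthz i j j, if_pos rfl]
      simp
    have hAud : star (A i *ᵥ uu) ⬝ᵥ (A i *ᵥ uu) = star uu ⬝ᵥ (E i *ᵥ uu) := by
      rw [aux_shift' (A i), Matrix.mulVec_mulVec, ← hE i]
    have hAure : (star uu ⬝ᵥ (E i *ᵥ uu)).re ≤ t := by
      have hps := aux_psd_re_nonneg hE1 uu
      have hsub : star uu ⬝ᵥ ((1 - E i) *ᵥ uu) = star uu ⬝ᵥ uu - star uu ⬝ᵥ (E i *ᵥ uu) := by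
        rw [Matrix.sub_mulVec]
        rw [dotProduct_sub, Matrix.one_mulVec]
      rw [hsub] at hps
      rw [Complex.sub_re] at hps
      rw [ht] at hps
      rw [Complex.ofReal_re] at hps
      linarith
    have htsq : t * t ≤ t := by
      have h1 : ((t : ℝ) : ℂ) = star (A i *ᵥ uu) ⬝ᵥ z i j := by
        rw [← ht, huu]
        rw [aux_shift' (A i)]
      have h2 : Complex.normSq ((t : ℝ) : ℂ) = t * t := by
        rw [Complex.normSq_ofReal]
      have h3 := aux_cs (A i *ᵥ uu) (z i j)
      rw [← h1] at h3
      rw [h2] at h3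
      have h4 : (star (A i *ᵥ uu) ⬝ᵥ (A i *ᵥ uu)).re ≤ t := by
        rw [hAud]; exact hAure
      have h5 : (star (z i j) ⬝ᵥ z i j).re = 1 := hz1
      rw [h5, mul_one] at h3
      calc t * t ≤ (star (A i *ᵥ uu) ⬝ᵥ (A i *ᵥ uu)).re := h3
        _ ≤ t := h4
    by_cases hzero : t = 0
    · rw [hzero]; norm_num
    · have htpos : 0 < t := lt_of_le_of_ne ht0 (Ne.symm hzero)
      nlinarith
  -- apply the core
  have hcore := core hn lam p γ G hlam0 hlam1 hp0 hγ0 H1 H2 H3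
  -- translate the double sum into the C expression
  have htrans : ∑ i, ∑ j, Real.negMulLog (p i * γ i j)
      = (∑ i, Real.negMulLog (p i)) + ∑ i, p i * vN (Mm i) := by
    rw [← Finset.sum_add_distrib]
    refine Finset.sum_congr rfl fun i _ => ?_
    by_cases h : p i = 0
    · rw [h]
      simp [Real.negMulLog_zero]
    · rw [hvNM i]
      calc ∑ j, Real.negMulLog (p i * γ i j)
          = ∑ j, (γ i j * Real.negMulLog (p i) + p i * Real.negMulLog (γ i j)) := by
            exact Finset.sum_congr rfl fun j _ => Real.negMulLog_mul _ _
        _ = (∑ j, γ i j) * Real.negMulLog (p i) + p i * ∑ j, Real.negMulLog (γ i j) := by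
            rw [Finset.sum_add_distrib, ← Finset.sum_mul, ← Finset.mul_sum]
        _ = Real.negMulLog (p i) + p i * ∑ j, Real.negMulLog (γ i j) := by
            rw [hγsum i h, one_mul]
  rw [hvNρ]
  have hfinal1 := hcore.1
  have hfinal2 := hcore.2
  rw [htrans] at hfinal1 hfinal2
  exact ⟨hfinal1, hfinal2⟩

lemma vN_idem {d : ℕ} (M : Matrix (Fin d) (Fin d) ℂ) (hH : M.IsHermitian)
    (hid : M * M = M) : vN M = 0 := by
  unfold vN
  rw [dif_pos hH]
  refine Finset.sum_eq_zero fun j _ => ?_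
  set t : ℝ := hH.eigenvalues j with htdef
  have hz := aux_mulvec hH j
  have h1 : M *ᵥ (M *ᵥ ecol hH j) = fun a => ((t * t : ℝ) : ℂ) * ecol hH j a := by
    rw [hz]
    have : (fun a => ((t : ℝ) : ℂ) * ecol hH j a) = ((t : ℝ) : ℂ) • ecol hH j := by
      funext a; simp
    rw [this, Matrix.mulVec_smul, hz]
    funext a
    push_cast
    simp
    ring
  have h2 : M *ᵥ (M *ᵥ ecol hH j) = fun a => ((t : ℝ) : ℂ) * ecol hH j a := by
    rw [Matrix.mulVec_mulVec, hid, hz]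
  have h3 : ∃ a, ecol hH j a ≠ 0 := by
    by_contra hcon
    push_neg at hcon
    have horth := aux_orth hH j j
    rw [if_pos rfl] at horth
    simp only [dotProduct, Pi.star_apply] at horth
    rw [Finset.sum_eq_zero (fun a _ => by rw [hcon a, mul_zero])] at horth
    exact zero_ne_one horth
  obtain ⟨a, ha⟩ := h3
  have h4 : ((t * t : ℝ) : ℂ) * ecol hH j a = ((t : ℝ) : ℂ) * ecol hH j a := by
    rw [← congrFun h1 a, ← congrFun h2 a]
  have h5 : ((t * t : ℝ) : ℂ) = ((t : ℝ) : ℂ) := mul_right_cancel₀ ha h4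
  have h6 : t * t = t := by exact_mod_cast h5
  have h7 : t * (t - 1) = 0 := by nlinarith [h6]
  rcases mul_eq_zero.mp h7 with h | h
  · rw [h]; exact Real.negMulLog_zero
  · have : t = 1 := by linarith
    rw [this]; exact Real.negMulLog_one

lemma aux_vv_herm {d : ℕ} (ψ : Fin d → ℂ) : (Matrix.vecMulVec ψ (star ψ)).IsHermitian := by
  show _ᴴ = _
  ext a b
  simp [Matrix.conjTranspose_apply, Matrix.vecMulVec_apply, mul_comm]

lemma aux_conjmul {d : ℕ} (Am : Matrix (Fin d) (Fin d) ℂ) (ψ : Fin d → ℂ) :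
    Am * Matrix.vecMulVec ψ (star ψ) * Amᴴ = Matrix.vecMulVec (Am *ᵥ ψ) (star (Am *ᵥ ψ)) := by
  ext a b
  simp only [Matrix.mul_apply, Matrix.vecMulVec_apply, Matrix.conjTranspose_apply,
    Pi.star_apply, Matrix.mulVec, dotProduct, star_sum, star_mul']
  calc ∑ x, (∑ y, Am a y * (ψ y * star (ψ x))) * star (Am b x)
      = ∑ x, (∑ y, Am a y * ψ y) * (star (ψ x) * star (Am b x)) := by
        refine Finset.sum_congr rfl fun x _ => ?_
        rw [Finset.sum_mul, Finset.sum_mul]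
        exact Finset.sum_congr rfl fun y _ => by ring
    _ = (∑ y, Am a y * ψ y) * ∑ x, star (Am b x) * star (ψ x) := by
        rw [Finset.mul_sum]
        exact Finset.sum_congr rfl fun x _ => by ring

lemma aux_vv_mul {d : ℕ} (φ : Fin d → ℂ) :
    Matrix.vecMulVec φ (star φ) * Matrix.vecMulVec φ (star φ)
      = (star φ ⬝ᵥ φ) • Matrix.vecMulVec φ (star φ) := by
  ext a b
  simp only [Matrix.mul_apply, Matrix.vecMulVec_apply, Matrix.smul_apply, Pi.star_apply,
    dotProduct, smul_eq_mul, Finset.sum_mul, Finset.mul_sum]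
  refine Finset.sum_congr rfl fun k _ => by ring

lemma aux_trace_vv {d : ℕ} (Em : Matrix (Fin d) (Fin d) ℂ) (ψ : Fin d → ℂ) :
    Matrix.trace (Em * Matrix.vecMulVec ψ (star ψ)) = star ψ ⬝ᵥ (Em *ᵥ ψ) := by
  unfold Matrix.trace
  simp only [Matrix.diag_apply, Matrix.mul_apply, Matrix.vecMulVec_apply, Pi.star_apply,
    dotProduct, Matrix.mulVec, Finset.mul_sum]
  refine Finset.sum_congr rfl fun a _ => Finset.sum_congr rfl fun b _ => by ring

lemma pure_case {d n : ℕ} (E A : Fin n → Matrix (Fin d) (Fin d) ℂ)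
    (hE : ∀ i, E i = (A i)ᴴ * A i) (ψ : Fin d → ℂ) (hψ : star ψ ⬝ᵥ ψ = 1) :
    vN (Matrix.vecMulVec ψ (star ψ)) = 0 ∧
    ∀ i, ((Matrix.trace (E i * Matrix.vecMulVec ψ (star ψ))).re) *
        vN ((((Matrix.trace (E i * Matrix.vecMulVec ψ (star ψ))).re : ℂ))⁻¹ •
          (A i * Matrix.vecMulVec ψ (star ψ) * (A i)ᴴ)) = 0 := by
  constructor
  · refine vN_idem _ (aux_vv_herm ψ) ?_
    rw [aux_vv_mul ψ, hψ, one_smul]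
  · intro i
    by_cases h : (Matrix.trace (E i * Matrix.vecMulVec ψ (star ψ))).re = 0
    · rw [h, zero_mul]
    · set φ : Fin d → ℂ := A i *ᵥ ψ with hφ
      have htr : Matrix.trace (E i * Matrix.vecMulVec ψ (star ψ)) = star φ ⬝ᵥ φ := by
        rw [aux_trace_vv, hE i, ← Matrix.mulVec_mulVec, ← aux_shift' (A i)]
      have hnrm := aux_nrm φ
      set pr : ℝ := (Matrix.trace (E i * Matrix.vecMulVec ψ (star ψ))).re with hpr
      have hre : pr = ∑ a, Complex.normSq (φ a) := by
        rw [hpr, htr, hnrm, Complex.ofReal_re]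
      have hφp : star φ ⬝ᵥ φ = ((pr : ℝ) : ℂ) := by rw [hnrm, hre]
      have hAρA : A i * Matrix.vecMulVec ψ (star ψ) * (A i)ᴴ = Matrix.vecMulVec φ (star φ) :=
        aux_conjmul (A i) ψ
      have hprC : ((pr : ℝ) : ℂ) ≠ 0 := by exact_mod_cast h
      have hMH : (((pr : ℝ) : ℂ)⁻¹ • (A i * Matrix.vecMulVec ψ (star ψ) * (A i)ᴴ)).IsHermitian := by
        rw [hAρA]
        show _ᴴ = _
        rw [Matrix.conjTranspose_smul, (aux_vv_herm φ).eq]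
        congr 1
        rw [← Complex.ofReal_inv, Complex.star_def, Complex.conj_ofReal]
      have hMM : (((pr : ℝ) : ℂ)⁻¹ • (A i * Matrix.vecMulVec ψ (star ψ) * (A i)ᴴ)) *
          (((pr : ℝ) : ℂ)⁻¹ • (A i * Matrix.vecMulVec ψ (star ψ) * (A i)ᴴ)) =
          ((pr : ℝ) : ℂ)⁻¹ • (A i * Matrix.vecMulVec ψ (star ψ) * (A i)ᴴ) := by
        rw [hAρA, smul_mul_smul_comm, aux_vv_mul φ, hφp, smul_smul]
        congr 1
        rw [mul_assoc, inv_mul_cancel₀ hprC, mul_one]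
      rw [vN_idem _ hMH hMM, mul_zero]


/-- For any n-outcome POVM, the relative entropy of POVM-based
coherence C_rel(ρ,E) = H({p_i}) + Σ_i p_i S(ρ_i) − S(ρ) satisfies
0 ≤ C_rel(ρ,E) ≤ log n, and for pure states ρ = |ψ⟩⟨ψ| it equals the Shannon
entropy H({⟨ψ|E_i|ψ⟩}). -/
theorem povm_coherence_bounds (d n : ℕ)
    (E A : Fin n → Matrix (Fin d) (Fin d) ℂ)
    (hE : ∀ i, E i = (A i)ᴴ * A i)
    (hsum : ∑ i, E i = 1)
    (C : Matrix (Fin d) (Fin d) ℂ → ℝ)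
    (hC : ∀ ρ : Matrix (Fin d) (Fin d) ℂ,
      C ρ = (∑ i, Real.negMulLog ((Matrix.trace (E i * ρ)).re))
        + (∑ i, ((Matrix.trace (E i * ρ)).re) *
            vN ((((Matrix.trace (E i * ρ)).re : ℂ))⁻¹ • (A i * ρ * (A i)ᴴ)))
        - vN ρ) :
    (∀ ρ : Matrix (Fin d) (Fin d) ℂ, ρ.PosSemidef → ρ.trace = 1 →
      0 ≤ C ρ ∧ C ρ ≤ Real.log n) ∧
    (∀ ψ : Fin d → ℂ, star ψ ⬝ᵥ ψ = 1 →
      C (Matrix.vecMulVec ψ (star ψ)) =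
        ∑ i, Real.negMulLog ((Matrix.trace (E i * Matrix.vecMulVec ψ (star ψ))).re)) := by
  constructor
  · intro ρ hpsd htrρ
    have hn : 0 < n := by
      rcases Nat.eq_zero_or_pos n with h | h
      · exfalso
        subst h
        have h1 : (1 : Matrix (Fin d) (Fin d) ℂ) = 0 := by rw [← hsum]; simp
        have h2 : ρ = 0 := by
          calc ρ = ρ * 1 := (mul_one ρ).symm
            _ = ρ * 0 := by rw [h1]
            _ = 0 := mul_zero ρ
        rw [h2] at htrρ
        simp at htrρ
      · exact h
    have hk := key E A hE hsum ρ hpsd htrρ hn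
    rw [hC ρ]
    constructor
    · linarith [hk.1]
    · linarith [hk.2]
  · intro ψ hψ
    rw [hC]
    have hp := pure_case E A hE ψ hψ
    rw [hp.1, Finset.sum_eq_zero (fun i _ => hp.2 i)]
    ring
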